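/- Let R ∈ k(x)^{n×p} be a rational matrix of rank r, and let N = φ_1(R)·R be its polynomial numerator matrix with Smith normal form having invariant factors γ_1 | γ_2 | ⋯ | γ_r. Write γ_i/φ_1(R) in lowest terms as ε_i/ψ_i with ψ_i monic. Then the determinantal denominators of R satisfy φ_i(R) = ψ_1·ψ_2⋯ψ_i for all 1 ≤ i ≤ r. -/

import Mathlib

open Polynomial

noncomputable section

/-- Normalization on a field: every nonzero element normalizes to `1`. -/
noncomputable def fieldNormalizationMonoid (K : Type*) [Field K] : NormalizationMonoid K := by
  classical
  exact
  { normUnit := fun a => if h : a = 0 then 1 else (Units.mk0 a h)⁻¹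
    normUnit_zero := dif_pos rfl
    normUnit_one := by
      rw [dif_neg one_ne_zero]
      exact Units.ext (by simp)
    normUnit_mul_units := fun {a} u ha => by
      rw [dif_neg (mul_ne_zero ha u.ne_zero), dif_neg ha]
      exact Units.ext (by simp <;> ring) }

attribute [local instance] fieldNormalizationMonoid

noncomputable local instance (K : Type*) [Field K] : NormalizedGCDMonoid (Polynomial K) :=
  UniqueFactorizationMonoid.toNormalizedGCDMonoid _

variable {k : Type*} [Field k] [CharZero k]

/-- The ℓ-th determinantal denominator of a rational matrix: the monic least common
denominator of all minors of size at most ℓ. -/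
def detDen {n p : ℕ} (R : Matrix (Fin n) (Fin p) (RatFunc k)) (ℓ : ℕ) : Polynomial k :=
  (Finset.range (ℓ + 1)).lcm fun i =>
    (Finset.univ : Finset ((Fin i ↪ Fin n) × (Fin i ↪ Fin p))).lcm fun fg =>
      (Matrix.det fun a b => R (fg.1 a) (fg.2 b)).denom

section AuxLemmas
lemma det_mul_submatrix_sum {α : Type*} [CommRing α] {m₁ m₂ n₁ : Type*}
    [Fintype m₁] [Fintype m₂] [Fintype n₁] [DecidableEq m₁] {ℓ : ℕ}
    (A : Matrix m₂ m₁ α) (M : Matrix m₁ n₁ α) (f : Fin ℓ → m₂) (g : Fin ℓ → n₁) :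
    ((A * M).submatrix f g).det =
      ∑ t : Fin ℓ → m₁, (∏ a, A (f a) (t a)) * (M.submatrix t g).det := by
  have h0 : ((A * M).submatrix f g) =
      fun a => ∑ j : m₁, A (f a) j • fun b => M j (g b) := by
    funext a b
    simp [Matrix.mul_apply, Matrix.submatrix_apply, Finset.sum_apply]
  calc ((A * M).submatrix f g).det
      = Matrix.detRowAlternating (fun a => ∑ j : m₁, A (f a) j • fun b => M j (g b)) := by
        rw [Matrix.det]; rw [h0]
    _ = ∑ t : Fin ℓ → m₁, Matrix.detRowAlternating
          (fun a => A (f a) (t a) • fun b => M (t a) (g b)) := by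
        exact (Matrix.detRowAlternating (R := α) (n := Fin ℓ)).toMultilinearMap.map_sum
          (g := fun a j => A (f a) j • fun b => M j (g b))
    _ = ∑ t : Fin ℓ → m₁, (∏ a, A (f a) (t a)) * (M.submatrix t g).det := by
        refine Finset.sum_congr rfl fun t _ => ?_
        have h1 := (Matrix.detRowAlternating (R := α) (n := Fin ℓ)).toMultilinearMap.map_smul_univ
          (fun a => A (f a) (t a)) (fun a b => M (t a) (g b))
        exact h1.trans (by rw [smul_eq_mul]; rfl)

lemma minor_mem_mul_left {α : Type*} [CommRing α] {m₁ m₂ n₁ : Type*}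
    [Fintype m₁] [Fintype m₂] [Fintype n₁] [DecidableEq m₁] {ℓ : ℕ}
    (I : Ideal α) (A : Matrix m₂ m₁ α) (M : Matrix m₁ n₁ α)
    (h : ∀ (f : Fin ℓ → m₁) (g : Fin ℓ → n₁), (M.submatrix f g).det ∈ I) :
    ∀ (f : Fin ℓ → m₂) (g : Fin ℓ → n₁), ((A * M).submatrix f g).det ∈ I := by
  intro f g
  rw [det_mul_submatrix_sum]
  exact Ideal.sum_mem I fun t _ => I.mul_mem_left _ (h t g)

lemma minor_mem_mul_right {α : Type*} [CommRing α] {m₁ n₁ n₂ : Type*}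
    [Fintype m₁] [Fintype n₁] [Fintype n₂] [DecidableEq n₁] {ℓ : ℕ}
    (I : Ideal α) (M : Matrix m₁ n₁ α) (B : Matrix n₁ n₂ α)
    (h : ∀ (f : Fin ℓ → m₁) (g : Fin ℓ → n₁), (M.submatrix f g).det ∈ I) :
    ∀ (f : Fin ℓ → m₁) (g : Fin ℓ → n₂), ((M * B).submatrix f g).det ∈ I := by
  intro f g
  have h' : ∀ (f' : Fin ℓ → n₁) (g' : Fin ℓ → m₁),
      (M.transpose.submatrix f' g').det ∈ I := by
    intro f' g'
    rw [← Matrix.transpose_submatrix, Matrix.det_transpose]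
    exact h g' f'
  have := minor_mem_mul_left I B.transpose M.transpose h' g f
  rw [← Matrix.transpose_mul, ← Matrix.transpose_submatrix, Matrix.det_transpose] at this
  exact this

lemma det_submatrix_eq_zero_left {α : Type*} [CommRing α] {m₁ n₁ : Type*} {ℓ : ℕ}
    (M : Matrix m₁ n₁ α) {f : Fin ℓ → m₁} (g : Fin ℓ → n₁)
    (hf : ¬ Function.Injective f) : (M.submatrix f g).det = 0 := by
  simp only [Function.Injective, not_forall] at hf
  obtain ⟨a, b, hab, hne⟩ := hf
  exact Matrix.det_zero_of_row_eq hne (by funext c; simp [hab])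

lemma det_submatrix_eq_zero_right {α : Type*} [CommRing α] {m₁ n₁ : Type*} {ℓ : ℕ}
    (M : Matrix m₁ n₁ α) (f : Fin ℓ → m₁) {g : Fin ℓ → n₁}
    (hg : ¬ Function.Injective g) : (M.submatrix f g).det = 0 := by
  rw [← Matrix.det_transpose, Matrix.transpose_submatrix]
  exact det_submatrix_eq_zero_left _ _ hg

lemma prod_range_dvd_prod_finset {α : Type*} [CommMonoid α] (γ : ℕ → α) (r : ℕ)
    (hmono : ∀ a b : ℕ, a ≤ b → b < r → γ a ∣ γ b) :
    ∀ (ℓ : ℕ) (T : Finset ℕ), T.card = ℓ → (∀ x ∈ T, x < r) →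
      (∏ j ∈ Finset.range ℓ, γ j) ∣ ∏ x ∈ T, γ x := by
  intro ℓ
  induction ℓ with
  | zero => intro T _ _; simp
  | succ ℓ ih =>
    intro T hcard hlt
    have hne : T.Nonempty := Finset.card_pos.mp (by omega)
    set m := T.max' hne with hm
    have hmem : m ∈ T := T.max'_mem hne
    have hsub : T ⊆ Finset.range (m + 1) := by
      intro x hx
      simp only [Finset.mem_range]
      exact Nat.lt_succ_of_le (T.le_max' x hx)
    have hℓm : ℓ ≤ m := by
      have := Finset.card_le_card hsub
      rw [hcard, Finset.card_range] at this
      omega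
    rw [Finset.prod_range_succ, ← Finset.mul_prod_erase T γ hmem, mul_comm (γ m)]
    exact mul_dvd_mul
      (ih (T.erase m) (by rw [Finset.card_erase_of_mem hmem, hcard]; rfl)
        fun x hx => hlt x (Finset.mem_of_mem_erase hx))
      (hmono ℓ m hℓm (hlt m hmem))

end AuxLemmas

set_option synthInstance.maxHeartbeats 1000000
set_option maxHeartbeats 2000000

/-- Smith–McMillan form and determinantal denominators: if `N = φ_1(R)·R` has Smith normal
form with invariant factors `γ_1 ∣ ⋯ ∣ γ_r` (`r = rank R`), and `γ_i/φ_1(R) = ε_i/ψ_i` in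
lowest terms with `ψ_i` monic, then `φ_i(R) = ψ_1 ⋯ ψ_i` for all `1 ≤ i ≤ r`. -/
theorem detDen_eq_prod_smithMcMillan {n p : ℕ} (R : Matrix (Fin n) (Fin p) (RatFunc k))
    (N : Matrix (Fin n) (Fin p) (Polynomial k))
    (hN : N.map (algebraMap (Polynomial k) (RatFunc k)) =
      (algebraMap (Polynomial k) (RatFunc k) (detDen R 1)) • R)
    (U : Matrix (Fin n) (Fin n) (Polynomial k)) (V : Matrix (Fin p) (Fin p) (Polynomial k))
    (hU : IsUnit U.det) (hV : IsUnit V.det)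
    (γ : ℕ → Polynomial k)
    (hsmith : ∀ i j, (U * N * V) i j =
      if (i : ℕ) = (j : ℕ) ∧ (i : ℕ) < R.rank then γ (i : ℕ) else 0)
    (hchain : ∀ i : ℕ, i + 1 < R.rank → γ i ∣ γ (i + 1))
    (ε ψ : ℕ → Polynomial k) (hψmonic : ∀ i, i < R.rank → (ψ i).Monic)
    (hcop : ∀ i, i < R.rank → IsCoprime (ε i) (ψ i))
    (hlow : ∀ i, i < R.rank → γ i * ψ i = ε i * detDen R 1) :
    ∀ i : ℕ, 1 ≤ i → i ≤ R.rank → detDen R i = ∏ j ∈ Finset.range i, ψ j := by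
  
  classical
  set r := R.rank with hrdef
  set φ := detDen R 1 with hφdef
  have hφℓne : ∀ ℓ : ℕ, detDen R ℓ ≠ 0 := by
    intro ℓ h
    rw [detDen, Finset.lcm_eq_zero_iff] at h
    obtain ⟨a, -, ha⟩ := h
    rw [Finset.lcm_eq_zero_iff] at ha
    obtain ⟨fg, -, hfg⟩ := ha
    exact RatFunc.denom_ne_zero _ hfg
  have hφmonic : ∀ ℓ : ℕ, (detDen R ℓ).Monic := by
    intro ℓ
    have h3 : normalize (detDen R ℓ) = detDen R ℓ := Finset.normalize_lcm
    rw [← h3]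
    exact Polynomial.monic_normalize (hφℓne ℓ)
  have hφne : φ ≠ 0 := hφℓne 1
  have hmonoDen : ∀ i j : ℕ, i ≤ j → detDen R i ∣ detDen R j := by
    intro i j hij
    apply Finset.lcm_dvd
    intro ℓ hℓ
    exact Finset.dvd_lcm (Finset.mem_range.mpr (by simp only [Finset.mem_range] at hℓ; omega))
  have hγmono : ∀ a b : ℕ, a ≤ b → b < r → γ a ∣ γ b := by
    intro a b hab
    induction b, hab using Nat.le_induction with
    | base => intro _; exact dvd_rfl
    | succ b hb ih => intro hlt; exact (ih (by omega)).trans (hchain b hlt)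
  have hψstep : ∀ j : ℕ, j + 1 < r → ψ (j + 1) ∣ ψ j := by
    intro j hj
    have h1 := hlow j (by omega)
    have h2 := hlow (j + 1) hj
    obtain ⟨t, ht⟩ := hchain j hj
    have hc := hcop (j + 1) hj
    have key : ε (j + 1) * ψ j * φ = ε j * (t * ψ (j + 1)) * φ := by
      calc ε (j + 1) * ψ j * φ = (γ (j + 1) * ψ (j + 1)) * ψ j := by rw [h2]; ring
        _ = (γ j * ψ j) * (t * ψ (j + 1)) := by rw [ht]; ring
        _ = ε j * (t * ψ (j + 1)) * φ := by rw [h1]; ring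
    have key2 : ε (j + 1) * ψ j = ε j * (t * ψ (j + 1)) := mul_right_cancel₀ hφne key
    have hd : ψ (j + 1) ∣ ε (j + 1) * ψ j := by rw [key2]; exact ⟨ε j * t, by ring⟩
    exact hc.symm.dvd_of_dvd_mul_left hd
  have hψmono : ∀ a b : ℕ, a ≤ b → b < r → ψ b ∣ ψ a := by
    intro a b hab
    induction b, hab using Nat.le_induction with
    | base => intro _; exact dvd_rfl
    | succ b hb ih => intro hlt; exact (hψstep b hlt).trans (ih (by omega))
  have hψprodmonic : ∀ i : ℕ, i ≤ r → (∏ j ∈ Finset.range i, ψ j).Monic := by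
    intro i hi
    exact Polynomial.monic_prod_of_monic _ _ fun j hj =>
      hψmonic j (lt_of_lt_of_le (Finset.mem_range.mp hj) hi)
  have hkeyprod : ∀ ℓ : ℕ, ℓ ≤ r →
      (∏ j ∈ Finset.range ℓ, γ j) * (∏ j ∈ Finset.range ℓ, ψ j) =
        (∏ j ∈ Finset.range ℓ, ε j) * φ ^ ℓ := by
    intro ℓ hℓ
    rw [← Finset.prod_mul_distrib,
      Finset.prod_congr rfl (fun j hj => hlow j (lt_of_lt_of_le (Finset.mem_range.mp hj) hℓ)),
      Finset.prod_mul_distrib, Finset.prod_const, Finset.card_range]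
  have hNdet : ∀ (ℓ : ℕ) (f : Fin ℓ → Fin n) (g : Fin ℓ → Fin p),
      algebraMap (Polynomial k) (RatFunc k) ((N.submatrix f g).det) =
        (algebraMap (Polynomial k) (RatFunc k) φ) ^ ℓ * ((R.submatrix f g).det) := by
    intro ℓ f g
    have h1 : (N.submatrix f g).map (algebraMap (Polynomial k) (RatFunc k)) =
        algebraMap (Polynomial k) (RatFunc k) φ • (R.submatrix f g) := by
      rw [← Matrix.submatrix_map, hN]
      ext a b
      simp [Matrix.smul_apply, Algebra.smul_def, smul_eq_mul]
    rw [RingHom.map_det, RingHom.mapMatrix_apply, h1, Matrix.det_smul, Fintype.card_fin]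
  have hdenomdvd : ∀ (i ℓ : ℕ), ℓ ≤ i → ∀ (f : Fin ℓ ↪ Fin n) (g : Fin ℓ ↪ Fin p),
      ((R.submatrix f g).det).denom ∣ detDen R i := by
    intro i ℓ hℓ f g
    refine dvd_trans ?_ (Finset.dvd_lcm (f := fun i =>
      (Finset.univ : Finset ((Fin i ↪ Fin n) × (Fin i ↪ Fin p))).lcm fun fg =>
        (Matrix.det fun a b => R (fg.1 a) (fg.2 b)).denom)
      (Finset.mem_range.mpr (Nat.lt_succ_of_le hℓ)))
    have hfg := Finset.dvd_lcm (s := (Finset.univ : Finset ((Fin ℓ ↪ Fin n) × (Fin ℓ ↪ Fin p))))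
      (f := fun fg => (Matrix.det fun a b => R (fg.1 a) (fg.2 b)).denom) (Finset.mem_univ ((f, g)))
    exact hfg
  have hSminor : ∀ (ℓ : ℕ) (f : Fin ℓ → Fin n) (g : Fin ℓ → Fin p),
      (∏ j ∈ Finset.range ℓ, γ j) ∣ ((U * N * V).submatrix f g).det := by
    intro ℓ f g
    by_cases hf : Function.Injective f
    · by_cases hg : Function.Injective g
      · rw [Matrix.det_apply]
        apply Finset.dvd_sum
        intro σ _
        have hsmul : ∀ (u : ℤˣ) (x : Polynomial k),
            (∏ j ∈ Finset.range ℓ, γ j) ∣ x → (∏ j ∈ Finset.range ℓ, γ j) ∣ u • x := by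
          intro u x hx
          rw [Units.smul_def, zsmul_eq_mul]
          exact hx.mul_left _
        apply hsmul
        by_cases hall : ∀ a : Fin ℓ,
            ((f (σ a) : ℕ) = (g a : ℕ) ∧ ((f (σ a) : ℕ)) < r)
        · have hprod : (∏ a, ((U * N * V).submatrix f g) (σ a) a) =
              ∏ a, γ ((f (σ a) : ℕ)) := by
            refine Finset.prod_congr rfl fun a _ => ?_
            rw [Matrix.submatrix_apply, hsmith, if_pos (hall a)]
          have hv : Function.Injective (fun a : Fin ℓ => ((f (σ a) : ℕ))) := by
            intro a b hab
            exact σ.injective (hf (Fin.val_injective hab))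
          have hT := prod_range_dvd_prod_finset γ r hγmono ℓ
            (Finset.univ.image fun a : Fin ℓ => ((f (σ a) : ℕ)))
            (by rw [Finset.card_image_of_injective _ hv, Finset.card_univ, Fintype.card_fin])
            (by intro x hx
                simp only [Finset.mem_image] at hx
                obtain ⟨a, -, rfl⟩ := hx
                exact (hall a).2)
          rw [Finset.prod_image (fun a _ b _ h => hv h)] at hT
          rw [hprod]
          exact hT
        · obtain ⟨a, ha⟩ := not_forall.mp hall
          have h0 : ((U * N * V).submatrix f g) (σ a) a = 0 := by
            rw [Matrix.submatrix_apply, hsmith, if_neg ha]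
          have hz : (∏ x, ((U * N * V).submatrix f g) (σ x) x) = 0 :=
            Finset.prod_eq_zero (Finset.mem_univ a) h0
          rw [hz]
          exact dvd_zero _
      · rw [det_submatrix_eq_zero_right _ _ hg]; exact dvd_zero _
    · rw [det_submatrix_eq_zero_left _ _ hf]; exact dvd_zero _
  have hNminor : ∀ (ℓ : ℕ) (f : Fin ℓ → Fin n) (g : Fin ℓ → Fin p),
      (∏ j ∈ Finset.range ℓ, γ j) ∣ ((N).submatrix f g).det := by
    intro ℓ f g
    letI := U.invertibleOfIsUnitDet hU
    letI := V.invertibleOfIsUnitDet hV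
    have hNeq : ⅟U * (U * N * V) * ⅟V = N := by
      rw [Matrix.mul_assoc U N V, ← Matrix.mul_assoc (⅟U) U (N * V), invOf_mul_self,
        Matrix.one_mul, Matrix.mul_assoc N V (⅟V), mul_invOf_self, Matrix.mul_one]
    set I : Ideal (Polynomial k) := Ideal.span {∏ j ∈ Finset.range ℓ, γ j} with hI
    have hS : ∀ (f' : Fin ℓ → Fin n) (g' : Fin ℓ → Fin p),
        (((U * N * V)).submatrix f' g').det ∈ I :=
      fun f' g' => Ideal.mem_span_singleton.mpr (hSminor ℓ f' g')
    have h2 := minor_mem_mul_right I _ (⅟V) (minor_mem_mul_left I (⅟U) _ hS) f g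
    rw [hNeq] at h2
    exact Ideal.mem_span_singleton.mp h2
  have key1 : ∀ i : ℕ, i ≤ r → detDen R i ∣ ∏ j ∈ Finset.range i, ψ j := by
    intro i hir
    apply Finset.lcm_dvd
    intro ℓ hℓmem
    apply Finset.lcm_dvd
    rintro ⟨f, g⟩ -
    have hℓ : ℓ ≤ i := by
      have := Finset.mem_range.mp hℓmem
      omega
    have hψne : (∏ j ∈ Finset.range i, ψ j) ≠ 0 := (hψprodmonic i hir).ne_zero
    show ((R.submatrix f g).det).denom ∣ ∏ j ∈ Finset.range i, ψ j
    rw [RatFunc.denom_dvd hψne]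
    obtain ⟨t, ht⟩ := hNminor ℓ f g
    refine ⟨t * (∏ j ∈ Finset.range ℓ, ε j) * ∏ j ∈ Finset.Ico ℓ i, ψ j, ?_⟩
    have hsplit : (∏ j ∈ Finset.range ℓ, ψ j) * (∏ j ∈ Finset.Ico ℓ i, ψ j) =
        ∏ j ∈ Finset.range i, ψ j := Finset.prod_range_mul_prod_Ico _ hℓ
    have hkey := hkeyprod ℓ (le_trans hℓ hir)
    have hpoly : (N.submatrix f g).det * (∏ j ∈ Finset.range i, ψ j) =
        (t * (∏ j ∈ Finset.range ℓ, ε j) * ∏ j ∈ Finset.Ico ℓ i, ψ j) * φ ^ ℓ := by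
      calc (N.submatrix f g).det * (∏ j ∈ Finset.range i, ψ j)
          = ((∏ j ∈ Finset.range ℓ, γ j) * (∏ j ∈ Finset.range ℓ, ψ j)) *
              (t * ∏ j ∈ Finset.Ico ℓ i, ψ j) := by rw [ht, ← hsplit]; ring
        _ = ((∏ j ∈ Finset.range ℓ, ε j) * φ ^ ℓ) *
              (t * ∏ j ∈ Finset.Ico ℓ i, ψ j) := by rw [hkey]
        _ = _ := by ring
    have hden : (algebraMap (Polynomial k) (RatFunc k)) φ ≠ 0 := RatFunc.algebraMap_ne_zero hφne
    have hden2 : (algebraMap (Polynomial k) (RatFunc k)) (∏ j ∈ Finset.range i, ψ j) ≠ 0 :=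
      RatFunc.algebraMap_ne_zero hψne
    have hNd := hNdet ℓ f g
    rw [eq_div_iff hden2]
    apply mul_left_cancel₀ (pow_ne_zero ℓ hden)
    calc (algebraMap (Polynomial k) (RatFunc k) φ) ^ ℓ *
          ((R.submatrix f g).det * algebraMap (Polynomial k) (RatFunc k) (∏ j ∈ Finset.range i, ψ j))
        = ((algebraMap (Polynomial k) (RatFunc k) φ) ^ ℓ * (R.submatrix f g).det) *
            algebraMap (Polynomial k) (RatFunc k) (∏ j ∈ Finset.range i, ψ j) := by ring
      _ = algebraMap (Polynomial k) (RatFunc k) ((N.submatrix f g).det) *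
            algebraMap (Polynomial k) (RatFunc k) (∏ j ∈ Finset.range i, ψ j) := by rw [← hNd]
      _ = algebraMap (Polynomial k) (RatFunc k)
            ((N.submatrix f g).det * ∏ j ∈ Finset.range i, ψ j) := (map_mul _ _ _).symm
      _ = algebraMap (Polynomial k) (RatFunc k)
            ((t * (∏ j ∈ Finset.range ℓ, ε j) * ∏ j ∈ Finset.Ico ℓ i, ψ j) * φ ^ ℓ) := by
          rw [hpoly]
      _ = (algebraMap (Polynomial k) (RatFunc k) φ) ^ ℓ *
            algebraMap (Polynomial k) (RatFunc k)
              (t * (∏ j ∈ Finset.range ℓ, ε j) * ∏ j ∈ Finset.Ico ℓ i, ψ j) := by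
          rw [map_mul, map_pow]; ring
  have main : ∀ i : ℕ, i ≤ r → detDen R i = ∏ j ∈ Finset.range i, ψ j := by
    intro i
    induction i with
    | zero =>
      intro _
      simp only [Finset.range_zero, Finset.prod_empty]
      have h1 := key1 0 (Nat.zero_le r)
      simp only [Finset.range_zero, Finset.prod_empty] at h1
      exact (hφmonic 0).eq_one_of_isUnit (isUnit_of_dvd_one h1)
    | succ i ih =>
      intro hir
      have hΦne := hφℓne (i + 1)
      obtain ⟨q, hq⟩ := key1 (i + 1) hir
      let I2 : Ideal (Polynomial k) :=
        { carrier := {x | φ ^ (i + 1) ∣ detDen R (i + 1) * x}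
          add_mem' := fun {x y} hx hy => by
            simp only [Set.mem_setOf_eq] at *
            rw [mul_add]
            exact dvd_add hx hy
          zero_mem' := by
            simp only [Set.mem_setOf_eq, mul_zero]
            exact dvd_zero _
          smul_mem' := fun c {x} hx => by
            simp only [Set.mem_setOf_eq, smul_eq_mul] at *
            have h := hx.mul_left c
            rwa [mul_left_comm] at h }
      have hI2 : ∀ x : Polynomial k, x ∈ I2 ↔ φ ^ (i + 1) ∣ detDen R (i + 1) * x :=
        fun _ => Iff.rfl
      have hNmem : ∀ (f : Fin (i + 1) → Fin n) (g : Fin (i + 1) → Fin p),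
          ((N.submatrix f g).det) ∈ I2 := by
        intro f g
        rw [hI2]
        by_cases hf : Function.Injective f
        · by_cases hg : Function.Injective g
          · have hd := hdenomdvd (i + 1) (i + 1) le_rfl ⟨f, hf⟩ ⟨g, hg⟩
            simp only [Function.Embedding.coeFn_mk] at hd
            obtain ⟨P, hP⟩ := (RatFunc.denom_dvd hΦne).mp hd
            have hNd := hNdet (i + 1) f g
            have hΦmapne : algebraMap (Polynomial k) (RatFunc k) (detDen R (i + 1)) ≠ 0 :=
              RatFunc.algebraMap_ne_zero hΦne
            have hcross : (N.submatrix f g).det * detDen R (i + 1) = φ ^ (i + 1) * P := by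
              apply RatFunc.algebraMap_injective
              rw [map_mul, map_mul, map_pow, hNd, hP, mul_assoc,
                div_mul_cancel₀ _ hΦmapne]
            exact ⟨P, by rw [mul_comm, hcross]⟩
          · rw [det_submatrix_eq_zero_right _ _ hg, mul_zero]
            exact dvd_zero _
        · rw [det_submatrix_eq_zero_left _ _ hf, mul_zero]
          exact dvd_zero _
      have hSmem := minor_mem_mul_right I2 _ V (minor_mem_mul_left I2 U N hNmem)
      have hn' : i + 1 ≤ n := le_trans hir (by simpa using R.rank_le_card_height)
      have hp' : i + 1 ≤ p := le_trans hir (by simpa using R.rank_le_card_width)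
      have hdiag : ((U * N * V).submatrix (fun a => Fin.castLE hn' a) (fun a => Fin.castLE hp' a)) =
          Matrix.diagonal (fun a : Fin (i + 1) => γ a.1) := by
        ext a b
        by_cases hab : a = b
        · subst hab
          have hcond : ((Fin.castLE hn' a : Fin n) : ℕ) = ((Fin.castLE hp' a : Fin p) : ℕ) ∧
              ((Fin.castLE hn' a : Fin n) : ℕ) < r :=
            ⟨by simp, by simp only [Fin.coe_castLE]; have := a.isLt; omega⟩
          rw [Matrix.submatrix_apply, hsmith, Matrix.diagonal_apply_eq, if_pos hcond]
          simp
        · rw [Matrix.submatrix_apply, hsmith, Matrix.diagonal_apply_ne _ hab, if_neg]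
          simp only [Fin.coe_castLE]
          intro hcon
          exact hab (Fin.ext hcon.1)
      have hminor : ((U * N * V).submatrix (fun a => Fin.castLE hn' a)
          (fun a => Fin.castLE hp' a)).det = ∏ j ∈ Finset.range (i + 1), γ j := by
        rw [hdiag, Matrix.det_diagonal]
        exact Fin.prod_univ_eq_prod_range (fun j => γ j) (i + 1)
      have star : φ ^ (i + 1) ∣ detDen R (i + 1) * ∏ j ∈ Finset.range (i + 1), γ j := by
        have hmem := hSmem (fun a => Fin.castLE hn' a) (fun a => Fin.castLE hp' a)
        rw [hI2, hminor] at hmem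
        exact hmem
      obtain ⟨c, hc⟩ := star
      have hkey := hkeyprod (i + 1) hir
      have h5 : c * ∏ j ∈ Finset.range (i + 1), ψ j =
          detDen R (i + 1) * ∏ j ∈ Finset.range (i + 1), ε j := by
        apply mul_left_cancel₀ (pow_ne_zero (i + 1) hφne)
        calc φ ^ (i + 1) * (c * ∏ j ∈ Finset.range (i + 1), ψ j)
            = (detDen R (i + 1) * ∏ j ∈ Finset.range (i + 1), γ j) *
                ∏ j ∈ Finset.range (i + 1), ψ j := by rw [hc]; ring
          _ = detDen R (i + 1) * ((∏ j ∈ Finset.range (i + 1), γ j) *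
                ∏ j ∈ Finset.range (i + 1), ψ j) := by ring
          _ = detDen R (i + 1) * ((∏ j ∈ Finset.range (i + 1), ε j) * φ ^ (i + 1)) := by
              rw [hkey]
          _ = φ ^ (i + 1) * (detDen R (i + 1) * ∏ j ∈ Finset.range (i + 1), ε j) := by ring
      have h6 : c * q = ∏ j ∈ Finset.range (i + 1), ε j := by
        apply mul_left_cancel₀ hΦne
        calc detDen R (i + 1) * (c * q) = c * (detDen R (i + 1) * q) := by ring
          _ = c * ∏ j ∈ Finset.range (i + 1), ψ j := by rw [← hq]
          _ = detDen R (i + 1) * ∏ j ∈ Finset.range (i + 1), ε j := h5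
      obtain ⟨s, hs⟩ := hmonoDen i (i + 1) (by omega)
      rw [ih (by omega)] at hs
      have h7 : ψ i = s * q := by
        have hne : (∏ j ∈ Finset.range i, ψ j) ≠ 0 := (hψprodmonic i (by omega)).ne_zero
        apply mul_left_cancel₀ hne
        calc (∏ j ∈ Finset.range i, ψ j) * ψ i = ∏ j ∈ Finset.range (i + 1), ψ j :=
              (Finset.prod_range_succ ψ i).symm
          _ = detDen R (i + 1) * q := hq
          _ = (∏ j ∈ Finset.range i, ψ j) * (s * q) := by rw [hs]; ring
      have hqψ : q ∣ ψ i := ⟨s, by rw [h7]; ring⟩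
      have hqε : q ∣ ∏ j ∈ Finset.range (i + 1), ε j := ⟨c, by rw [← h6]; ring⟩
      have hcop2 : IsCoprime (∏ j ∈ Finset.range (i + 1), ε j) (ψ i) := by
        apply IsCoprime.prod_left
        intro j hj
        have hji : j ≤ i := by
          have := Finset.mem_range.mp hj
          omega
        exact (hcop j (by omega)).of_isCoprime_of_dvd_right (hψmono j i hji (by omega))
      have hqunit : IsUnit q := hcop2.isUnit_of_dvd' hqε hqψ
      have hq1 : q = 1 := by
        obtain ⟨u, hu, huq⟩ := Polynomial.isUnit_iff.mp hqunit
        have hlc := congrArg Polynomial.leadingCoeff hq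
        rw [(hψprodmonic (i + 1) hir).leadingCoeff, Polynomial.leadingCoeff_mul,
          (hφmonic (i + 1)).leadingCoeff, one_mul] at hlc
        rw [← huq, Polynomial.leadingCoeff_C] at hlc
        rw [← huq, ← hlc, Polynomial.C_1]
      rw [hq, hq1, mul_one]
  exact fun i _ hir => main i hir
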